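/- Let n be the Lie algebra with dual basis f^1,...,f^7 and structure equations df^5 = f^{27}+f^{12}, df^6 = f^{37}+f^{13}, df^i=0 for i∈{1,2,3,4,7}. Then the coframe (e^1,...,e^7) = (f^2−f^6, f^1, −f^4, f^5, √3 f^3, −√3 f^6, √3 f^7) yields closed forms α and β of the standard SO(4)-type, i.e. dα = 0 = dβ. -/
import Mathlib


/- STATEMENT 10: for the Lie algebra with df⁵ = f^{27}+f^{12}, df⁶ = f^{37}+f^{13},
   dfⁱ = 0 otherwise, the coframe
   (e^1,…,e^7) = (f^2−f^6, f^1, −f^4, f^5, √3 f^3, −√3 f^6, √3 f^7)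
   yields closed SO(4)-forms: dα = 0 = dβ. -/

noncomputable section

def F (i : Fin 7) : ExteriorAlgebra ℝ (Fin 7 → ℝ) :=
  ExteriorAlgebra.ι ℝ (Pi.single i 1)

/-- The coframe (e^1,…,e^7) = (f^2−f^6, f^1, −f^4, f^5, √3 f^3, −√3 f^6, √3 f^7). -/
def e : Fin 7 → ExteriorAlgebra ℝ (Fin 7 → ℝ) :=
  ![F 1 - F 5, F 0, -F 3, F 4, Real.sqrt 3 • F 2, -(Real.sqrt 3 • F 5), Real.sqrt 3 • F 6]

def α : ExteriorAlgebra ℝ (Fin 7 → ℝ) :=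
  (e 0 * e 1 - e 2 * e 3) * e 4 + (e 0 * e 2 - e 3 * e 1) * e 5
    + (e 0 * e 3 - e 1 * e 2) * e 6 - (3:ℝ) • (e 4 * e 5 * e 6)

def β : ExteriorAlgebra ℝ (Fin 7 → ℝ) :=
  -((e 0 * e 1 - e 2 * e 3) * (e 5 * e 6))
    - (e 0 * e 2 - e 3 * e 1) * (e 6 * e 4)
    - (e 0 * e 3 - e 1 * e 2) * (e 4 * e 5)
    - (3:ℝ) • (e 0 * e 1 * e 2 * e 3)

lemma Fsq (i : Fin 7) : F i * F i = 0 := ExteriorAlgebra.ι_sq_zero _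

lemma Fswap (i j : Fin 7) : F j * F i = -(F i * F j) := by
  exact eq_neg_of_add_eq_zero_left
    (ExteriorAlgebra.ι_add_mul_swap (R := ℝ) (M := Fin 7 → ℝ) (Pi.single j 1) (Pi.single i 1))

lemma Fswap' (i j : Fin 7) (x : ExteriorAlgebra ℝ (Fin 7 → ℝ)) :
    F j * (F i * x) = -(F i * (F j * x)) := by
  rw [← mul_assoc, Fswap, neg_mul, mul_assoc]

lemma Fsq' (i : Fin 7) (x : ExteriorAlgebra ℝ (Fin 7 → ℝ)) : F i * (F i * x) = 0 := by
  rw [← mul_assoc, Fsq, zero_mul]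

lemma s3 : Real.sqrt 3 * Real.sqrt 3 = 3 := Real.mul_self_sqrt (by norm_num)

set_option maxHeartbeats 4000000 in
theorem n2family_harmonic_SO4
    (d : ExteriorAlgebra ℝ (Fin 7 → ℝ) →ₗ[ℝ] ExteriorAlgebra ℝ (Fin 7 → ℝ))
    (h0 : d (F 0) = 0) (h1 : d (F 1) = 0) (h2 : d (F 2) = 0) (h3 : d (F 3) = 0)
    (h4 : d (F 4) = F 1 * F 6 + F 0 * F 1)
    (h5 : d (F 5) = F 2 * F 6 + F 0 * F 2)
    (h6 : d (F 6) = 0)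
    (htriple : ∀ i j k : Fin 7,
      d (F i * F j * F k) = d (F i) * F j * F k - F i * d (F j) * F k + F i * F j * d (F k))
    (hquad : ∀ i j k l : Fin 7,
      d (F i * F j * F k * F l)
        = d (F i) * F j * F k * F l - F i * d (F j) * F k * F l
          + F i * F j * d (F k) * F l - F i * F j * F k * d (F l)) :
    d α = 0 ∧ d β = 0 := by
  constructor
  · show d α = 0
    simp only [α, show e 0 = F 1 - F 5 from rfl, show e 1 = F 0 from rfl,
      show e 2 = -F 3 from rfl, show e 3 = F 4 from rfl,
      show e 4 = Real.sqrt 3 • F 2 from rfl, show e 5 = -(Real.sqrt 3 • F 5) from rfl,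
      show e 6 = Real.sqrt 3 • F 6 from rfl]
    simp only [sub_mul, mul_sub, add_mul, mul_add, neg_mul, mul_neg, smul_mul_assoc,
      mul_smul_comm, neg_neg, smul_smul, smul_neg, neg_smul, s3, ← mul_assoc]
    simp only [map_add, map_sub, map_neg, map_smul, htriple, hquad, h0, h1, h2, h3, h4, h5, h6,
      zero_mul, mul_zero, add_mul, mul_add, sub_mul, mul_sub, neg_mul, mul_neg, zero_sub,
      sub_zero, add_zero, zero_add, neg_zero, neg_neg, smul_neg, smul_zero]
    simp only [mul_assoc]
    simp only [Fsq' 0, Fsq' 1, Fsq' 2, Fsq' 3, Fsq' 4, Fsq' 5, Fsq' 6,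
      Fsq 0, Fsq 1, Fsq 2, Fsq 3, Fsq 4, Fsq 5, Fsq 6,
      Fswap' 0 1, Fswap' 0 2, Fswap' 0 3, Fswap' 0 4, Fswap' 0 5, Fswap' 0 6, Fswap' 1 2,
      Fswap' 1 3, Fswap' 1 4, Fswap' 1 5, Fswap' 1 6, Fswap' 2 3, Fswap' 2 4, Fswap' 2 5,
      Fswap' 2 6, Fswap' 3 4, Fswap' 3 5, Fswap' 3 6, Fswap' 4 5, Fswap' 4 6, Fswap' 5 6,
      Fswap 0 1, Fswap 0 2, Fswap 0 3, Fswap 0 4, Fswap 0 5, Fswap 0 6, Fswap 1 2,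
      Fswap 1 3, Fswap 1 4, Fswap 1 5, Fswap 1 6, Fswap 2 3, Fswap 2 4, Fswap 2 5,
      Fswap 2 6, Fswap 3 4, Fswap 3 5, Fswap 3 6, Fswap 4 5, Fswap 4 6, Fswap 5 6,
      mul_neg, neg_neg, mul_zero, zero_mul, smul_neg, smul_zero, neg_zero,
      add_zero, zero_add, sub_zero, zero_sub]
    module
  · show d β = 0
    simp only [β, show e 0 = F 1 - F 5 from rfl, show e 1 = F 0 from rfl,
      show e 2 = -F 3 from rfl, show e 3 = F 4 from rfl,
      show e 4 = Real.sqrt 3 • F 2 from rfl, show e 5 = -(Real.sqrt 3 • F 5) from rfl,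
      show e 6 = Real.sqrt 3 • F 6 from rfl]
    simp only [sub_mul, mul_sub, add_mul, mul_add, neg_mul, mul_neg, smul_mul_assoc,
      mul_smul_comm, neg_neg, smul_smul, smul_neg, neg_smul, s3, ← mul_assoc]
    simp only [map_add, map_sub, map_neg, map_smul, htriple, hquad, h0, h1, h2, h3, h4, h5, h6,
      zero_mul, mul_zero, add_mul, mul_add, sub_mul, mul_sub, neg_mul, mul_neg, zero_sub,
      sub_zero, add_zero, zero_add, neg_zero, neg_neg, smul_neg, smul_zero]
    simp only [mul_assoc]
    simp only [Fsq' 0, Fsq' 1, Fsq' 2, Fsq' 3, Fsq' 4, Fsq' 5, Fsq' 6,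
      Fsq 0, Fsq 1, Fsq 2, Fsq 3, Fsq 4, Fsq 5, Fsq 6,
      Fswap' 0 1, Fswap' 0 2, Fswap' 0 3, Fswap' 0 4, Fswap' 0 5, Fswap' 0 6, Fswap' 1 2,
      Fswap' 1 3, Fswap' 1 4, Fswap' 1 5, Fswap' 1 6, Fswap' 2 3, Fswap' 2 4, Fswap' 2 5,
      Fswap' 2 6, Fswap' 3 4, Fswap' 3 5, Fswap' 3 6, Fswap' 4 5, Fswap' 4 6, Fswap' 5 6,
      Fswap 0 1, Fswap 0 2, Fswap 0 3, Fswap 0 4, Fswap 0 5, Fswap 0 6, Fswap 1 2,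
      Fswap 1 3, Fswap 1 4, Fswap 1 5, Fswap 1 6, Fswap 2 3, Fswap 2 4, Fswap 2 5,
      Fswap 2 6, Fswap 3 4, Fswap 3 5, Fswap 3 6, Fswap 4 5, Fswap 4 6, Fswap 5 6,
      mul_neg, neg_neg, mul_zero, zero_mul, smul_neg, smul_zero, neg_zero,
      add_zero, zero_add, sub_zero, zero_sub]
    module


end
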